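/- arXiv:2110.02380 — 2 statements merged into one kernel-verified Lean document; each statement's English description precedes it below -/
import Mathlib

section
/- Let B be a dense *-subalgebra of a C*-algebra A. Suppose B is spectrally invariant in A, i.e., every element of B (after adjoining a unit if necessary) which is invertible in A has its inverse in B. Then every C*-seminorm p on B satisfies p(b) ≤ ‖b‖_A for all b ∈ B. -/
set_option synthInstance.maxHeartbeats 1000000
set_option maxHeartbeats 4000000

open UniformSpace SeparationQuotient

theorem aux_exists_spectrum {R : Type*} [Ring R] [Algebra ℂ R] [StarRing R] [StarModule ℂ R]
    (Q : R → ℝ)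
    (hsmul : ∀ (c : ℂ) (x : R), Q (c • x) = ‖c‖ * Q x)
    (hadd : ∀ x y, Q (x + y) ≤ Q x + Q y)
    (hmul : ∀ x y, Q (x * y) ≤ Q x * Q y)
    (hstar : ∀ x, Q (star x) = Q x)
    (hcstar : ∀ x, Q (star x * x) = Q x ^ 2)
    (hone : Q 1 = 1)
    (a : R) (ha : IsSelfAdjoint a) :
    ∃ l : ℂ, ‖l‖ = Q a ∧ ¬ IsUnit (algebraMap ℂ R l - a) := by
  have hQ0 : Q 0 = 0 := by simpa using hsmul 0 0
  have hneg : ∀ x, Q (-x) = Q x := fun x => by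
    simpa [neg_one_smul ℂ x] using hsmul (-1) x
  have hQnonneg : ∀ x, 0 ≤ Q x := fun x => by
    have := hadd x (-x)
    rw [add_neg_cancel, hQ0, hneg] at this
    linarith
  letI sg : SeminormedAddCommGroup R := AddGroupSeminorm.toSeminormedAddCommGroup
    { toFun := Q, map_zero' := hQ0, add_le' := hadd, neg' := hneg }
  have hnorm : ∀ x : R, ‖x‖ = Q x := fun _ => rfl
  letI : SeminormedRing R :=
    { ‹Ring R›, sg with norm_mul_le := hmul }
  letI : NormedSpace ℂ R := ⟨fun c x => le_of_eq (hsmul c x)⟩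
  letI : NormedAlgebra ℂ R :=
    { ‹Algebra ℂ R› with norm_smul_le := fun c x => le_of_eq (hsmul c x) }
  -- star is an isometry on R
  have star_iso : Isometry (star : R → R) := Isometry.of_dist_eq fun x y => by
    rw [dist_eq_norm, dist_eq_norm, ← star_sub, hnorm, hnorm, hstar]
  -- the separation quotient
  letI : Star (SeparationQuotient R) :=
    ⟨SeparationQuotient.lift (fun x => mk (star x))
      (fun x y h => mk_eq_mk.mpr (h.map star_iso.continuous))⟩
  have star_mk : ∀ x : R, star (mk x) = mk (star x) := fun _ => rfl
  letI : StarRing (SeparationQuotient R) :=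
    { star_involutive := surjective_mk.forall.mpr fun x => by
        rw [star_mk, star_mk, star_star]
      star_mul := surjective_mk.forall₂.mpr fun x y => by
        rw [← mk_mul, star_mk, star_mk, star_mk, star_mul, mk_mul]
      star_add := surjective_mk.forall₂.mpr fun x y => by
        rw [← mk_add, star_mk, star_mk, star_mk, star_add, mk_add] }
  letI : StarModule ℂ (SeparationQuotient R) :=
    ⟨fun c => surjective_mk.forall.mpr fun x => by
      rw [← mk_smul, star_mk, star_mk, star_smul, mk_smul]⟩
  have norm_star_mk : ∀ u : SeparationQuotient R, ‖star u‖ = ‖u‖ :=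
    surjective_mk.forall.mpr fun x => by
      rw [star_mk, norm_mk, norm_mk, hnorm, hnorm, hstar]
  have sq_star_iso : Isometry (star : SeparationQuotient R → SeparationQuotient R) :=
    Isometry.of_dist_eq fun u v => by
      rw [dist_eq_norm, dist_eq_norm, ← star_sub, norm_star_mk]
  have cstar_mk : ∀ u : SeparationQuotient R, ‖star u * u‖ = ‖u‖ * ‖u‖ :=
    surjective_mk.forall.mpr fun x => by
      rw [star_mk, ← mk_mul, norm_mk, norm_mk, hnorm, hnorm, hcstar, sq]
  -- the completion
  set C := Completion (SeparationQuotient R) with hC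
  letI : Star C := ⟨Completion.map star⟩
  have star_coe : ∀ u : SeparationQuotient R, star (↑u : C) = ↑(star u) := fun u =>
    Completion.map_coe sq_star_iso.uniformContinuous u
  have star_cont : Continuous (star : C → C) := Completion.continuous_map
  letI : StarRing C :=
    { star_involutive := fun x => Completion.induction_on x
        (isClosed_eq (star_cont.comp star_cont) continuous_id) (fun u => by
          rw [star_coe, star_coe, star_star])
      star_mul := fun x y => Completion.induction_on₂ x y
        (isClosed_eq (star_cont.comp continuous_mul)
          ((star_cont.comp continuous_snd).mul (star_cont.comp continuous_fst))) (fun u v => by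
          rw [← Completion.coe_mul, star_coe, star_coe, star_coe, star_mul, Completion.coe_mul])
      star_add := fun x y => Completion.induction_on₂ x y
        (isClosed_eq (star_cont.comp continuous_add)
          ((star_cont.comp continuous_fst).add (star_cont.comp continuous_snd))) (fun u v => by
          rw [← Completion.coe_add, star_coe, star_coe, star_coe, star_add, Completion.coe_add]) }
  letI : StarModule ℂ C :=
    ⟨fun c x => Completion.induction_on x
      (isClosed_eq (star_cont.comp (continuous_const_smul c))
        ((continuous_const_smul (star c)).comp star_cont)) (fun u => by
        rw [← Completion.coe_smul, star_coe, star_coe, star_smul, Completion.coe_smul])⟩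
  have cstar_C : ∀ x : C, ‖star x * x‖ = ‖x‖ * ‖x‖ := fun x => Completion.induction_on x
    (isClosed_eq (continuous_norm.comp (star_cont.mul continuous_id))
      (continuous_norm.mul continuous_norm)) (fun u => by
      rw [star_coe, ← Completion.coe_mul, Completion.norm_coe, Completion.norm_coe, cstar_mk])
  letI : CStarRing C := ⟨fun {x} => (cstar_C x).ge⟩
  have hnorm_one : ‖(1 : C)‖ = 1 := by
    rw [← Completion.coe_one, Completion.norm_coe, ← mk_one, norm_mk, hnorm, hone]
  haveI : Nontrivial C := nontrivial_of_ne 1 0 (fun h => by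
    rw [h, norm_zero] at hnorm_one; exact one_ne_zero hnorm_one.symm)
  letI : UniformContinuousConstSMul ℂ (SeparationQuotient R) :=
    uniformContinuousConstSMul_of_continuousConstSMul _ _
  letI : NormedAlgebra ℂ C :=
    { (inferInstance : Algebra ℂ C) with norm_smul_le := fun c x => by exact norm_smul_le c x }
  letI : CStarAlgebra C :=
    { toNormedRing := inferInstance
      toStarRing := ‹_›
      toCompleteSpace := inferInstance
      toCStarRing := ‹_›
      toNormedAlgebra := ‹_›
      toStarModule := ‹_› }
  -- the canonical map R → C
  let mkRH : R →+* SeparationQuotient R :=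
    { toFun := mk, map_one' := mk_one, map_mul' := mk_mul, map_zero' := mk_zero,
      map_add' := mk_add }
  let π : R →+* C := (Completion.coeRingHom).comp mkRH
  have hπnorm : ∀ x : R, ‖π x‖ = Q x := fun x => by
    show ‖((mk x : SeparationQuotient R) : C)‖ = Q x
    rw [Completion.norm_coe, norm_mk, hnorm]
  have hπsmul : ∀ (c : ℂ) (x : R), π (c • x) = c • π x := fun c x => by
    show ((mk (c • x) : SeparationQuotient R) : C) = c • ((mk x : SeparationQuotient R) : C)
    rw [mk_smul, Completion.coe_smul]
  set b : C := π a with hb_def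
  have hb : IsSelfAdjoint b := by
    show star ((mk a : SeparationQuotient R) : C) = ((mk a : SeparationQuotient R) : C)
    rw [star_coe, star_mk, ha.star_eq]
  obtain ⟨l, hlmem, hl⟩ := spectrum.exists_nnnorm_eq_spectralRadius b
  have h2 : spectralRadius ℂ b = (‖b‖₊ : ENNReal) := hb.spectralRadius_eq_nnnorm
  have hnl : ‖l‖ = Q a := by
    have h3 : (‖l‖₊ : ENNReal) = (‖b‖₊ : ENNReal) := hl.trans h2
    have h4 : ‖l‖ = ‖b‖ := congrArg NNReal.toReal (ENNReal.coe_inj.mp h3)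
    rw [h4, hb_def, hπnorm]
  refine ⟨l, hnl, fun hu => ?_⟩
  have h5 : IsUnit (π (algebraMap ℂ R l - a)) := hu.map π
  have h6 : π (algebraMap ℂ R l - a) = algebraMap ℂ C l - b := by
    rw [map_sub, Algebra.algebraMap_eq_smul_one, Algebra.algebraMap_eq_smul_one,
      hπsmul, map_one]
  rw [h6] at h5
  exact spectrum.mem_iff.mp hlmem h5

/-- Let `B` be a dense *-subalgebra of a C*-algebra `A` which is spectrally invariant in `A`
(i.e. in the unitizations, inverses taken in `Ã` of elements of `B̃` lie in `B̃`).  Then every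
C*-seminorm `p` on `B` satisfies `p(b) ≤ ‖b‖_A` for all `b ∈ B`. -/
theorem cstar_seminorm_le_norm_of_spectrally_invariant
    {A : Type*} [NonUnitalCStarAlgebra A] [StarModule ℂ A]
    (B : NonUnitalStarSubalgebra ℂ A)
    (hdense : Dense (B : Set A))
    (hspec : ∀ x : Unitization ℂ A, x.snd ∈ B →
      ∀ y : Unitization ℂ A, x * y = 1 → y * x = 1 → y.snd ∈ B)
    (p : A → ℝ)
    (hp_nonneg : ∀ b ∈ B, 0 ≤ p b)
    (hp_smul : ∀ b ∈ B, ∀ c : ℂ, p (c • b) = ‖c‖ * p b)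
    (hp_add : ∀ b ∈ B, ∀ b' ∈ B, p (b + b') ≤ p b + p b')
    (hp_mul : ∀ b ∈ B, ∀ b' ∈ B, p (b * b') ≤ p b * p b')
    (hp_star : ∀ b ∈ B, p (star b) = p b)
    (hp_cstar : ∀ b ∈ B, p (star b * b) = p b ^ 2) :
    ∀ b ∈ B, p b ≤ ‖b‖ := by
  intro b hb
  rcases eq_or_lt_of_le (hp_nonneg b hb) with h0 | hpb
  · rw [← h0]; exact norm_nonneg b
  -- reduce to the self-adjoint element a = star b * b
  set a : A := star b * b with ha_def
  have haB : a ∈ B := mul_mem (star_mem hb) hb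
  have ha_star : star a = a := by rw [ha_def, star_mul, star_star]
  have hpa : p a = p b ^ 2 := hp_cstar b hb
  have hpa_pos : 0 < p a := hpa ▸ pow_pos hpb 2
  suffices h : p a ≤ ‖a‖ by
    have hsq : p b ^ 2 ≤ ‖b‖ ^ 2 := by
      rw [← hpa]
      refine h.trans (le_of_eq ?_)
      rw [ha_def, CStarRing.norm_star_mul_self, sq]
    nlinarith [norm_nonneg b]
  by_contra hcon
  push_neg at hcon
  -- the seminorm on ↥B
  set q : ↥B → ℝ := fun c => p ↑c with hq_def
  have hq_nonneg : ∀ c : ↥B, 0 ≤ q c := fun c => hp_nonneg _ c.2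
  have hq_smul : ∀ (γ : ℂ) (c : ↥B), q (γ • c) = ‖γ‖ * q c := fun γ c => by
    simpa [hq_def] using hp_smul _ c.2 γ
  have hq_add : ∀ c d : ↥B, q (c + d) ≤ q c + q d := fun c d => by
    simpa [hq_def] using hp_add _ c.2 _ d.2
  have hq_mul : ∀ c d : ↥B, q (c * d) ≤ q c * q d := fun c d => by
    simpa [hq_def] using hp_mul _ c.2 _ d.2
  have hq_star : ∀ c : ↥B, q (star c) = q c := fun c => by
    simpa [hq_def] using hp_star _ c.2
  have hq_cstar : ∀ c : ↥B, q (star c * c) = q c ^ 2 := fun c => by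
    simpa [hq_def] using hp_cstar _ c.2
  have hq0 : q (0 : ↥B) = 0 := by
    have := hq_smul 0 0
    simpa using this
  -- the action of the unitization on ↥B
  set mulAct : Unitization ℂ ↥B → ↥B → ↥B := fun x c => x.fst • c + x.snd * c with hmulAct_def
  have hL : ∀ (x : Unitization ℂ ↥B) (c : ↥B),
      (Unitization.inr (mulAct x c) : Unitization ℂ ↥B) = x * Unitization.inr c := by
    intro x c
    refine Unitization.ext ?_ ?_
    · simp [Unitization.fst_mul]
    · simp [hmulAct_def, Unitization.snd_mul]
  have hinj : Function.Injective (Unitization.inr : ↥B → Unitization ℂ ↥B) :=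
    Unitization.inr_injective
  have m_assoc : ∀ x y c, mulAct (x * y) c = mulAct x (mulAct y c) := fun x y c => by
    apply hinj
    simp only [hL, mul_assoc]
  have m_add : ∀ x y c, mulAct (x + y) c = mulAct x c + mulAct y c := fun x y c => by
    apply hinj
    simp only [hL, Unitization.inr_add, add_mul]
  have m_smul : ∀ (γ : ℂ) x c, mulAct (γ • x) c = γ • mulAct x c := fun γ x c => by
    apply hinj
    simp only [hL, Unitization.inr_smul, smul_mul_assoc]
  have m_smul_right : ∀ x (γ : ℂ) c, mulAct x (γ • c) = γ • mulAct x c := fun x γ c => by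
    apply hinj
    simp only [hL, Unitization.inr_smul, mul_smul_comm]
  have m_one : ∀ c, mulAct 1 c = c := fun c => by
    apply hinj
    simp only [hL, one_mul]
  have m_inr : ∀ d c, mulAct (Unitization.inr d) c = d * c := fun d c => by
    apply hinj
    simp only [hL, Unitization.inr_mul]
  have m_zero : ∀ c, mulAct 0 c = 0 := fun c => by
    apply hinj
    simp only [hL, zero_mul, Unitization.inr_zero]
  have m_cstar : ∀ x c, star (mulAct x c) * mulAct x c = star c * mulAct (star x * x) c := by
    intro x c
    apply hinj
    simp only [Unitization.inr_mul, Unitization.inr_star, hL, star_mul, mul_assoc]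
  -- the C*-seminorm on the unitization
  set S : Unitization ℂ ↥B → Set ℝ := fun x => (fun c : ↥B => q (mulAct x c)) '' {c | q c ≤ 1}
    with hS_def
  set Q : Unitization ℂ ↥B → ℝ := fun x => sSup (S x) with hQ_def
  have m_zero_right : ∀ x, mulAct x (0 : ↥B) = 0 := fun x => by
    simp [hmulAct_def]
  have hmem0 : ∀ x, (0 : ℝ) ∈ S x := fun x =>
    ⟨0, by simp [hq0], by simp [m_zero_right, hq0]⟩
  have hq_bound : ∀ x c, q (mulAct x c) ≤ ‖x.fst‖ * q c + q x.snd * q c := by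
    intro x c
    calc q (mulAct x c) ≤ q (x.fst • c) + q (x.snd * c) := hq_add _ _
    _ ≤ ‖x.fst‖ * q c + q x.snd * q c := by
        rw [hq_smul]; exact add_le_add le_rfl (hq_mul _ _)
  have hbdd : ∀ x, BddAbove (S x) := fun x => ⟨‖x.fst‖ + q x.snd, by
    rintro t ⟨c, (hc : q c ≤ 1), rfl⟩
    refine (hq_bound x c).trans ?_
    have h1 : ‖x.fst‖ * q c ≤ ‖x.fst‖ := mul_le_of_le_one_right (norm_nonneg _) hc
    have h2 : q x.snd * q c ≤ q x.snd := mul_le_of_le_one_right (hq_nonneg _) hc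
    linarith⟩
  have hQ_nonneg : ∀ x, 0 ≤ Q x := fun x => le_csSup (hbdd x) (hmem0 x)
  have hle : ∀ x c, q c ≤ 1 → q (mulAct x c) ≤ Q x := fun x c hc =>
    le_csSup (hbdd x) ⟨c, hc, rfl⟩
  have hQ_le : ∀ x M, (∀ c, q c ≤ 1 → q (mulAct x c) ≤ M) → Q x ≤ M := fun x M h =>
    csSup_le ⟨0, hmem0 x⟩ (by rintro t ⟨c, (hc : q c ≤ 1), rfl⟩; exact h c hc)
  have hQ_mulAct : ∀ x c, q (mulAct x c) ≤ Q x * q c := by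
    intro x c
    rcases eq_or_lt_of_le (hq_nonneg c) with hc0 | hcpos
    · have h1 : q (mulAct x c) ≤ 0 := by
        have := hq_bound x c
        rw [← hc0] at this; simpa using this
      refine h1.trans ?_
      rw [← hc0, mul_zero]
    · have hcne : ((q c : ℝ) : ℂ) ≠ 0 := by
        exact_mod_cast ne_of_gt hcpos
      set c' : ↥B := (((q c : ℝ) : ℂ))⁻¹ • c with hc'
      have hqc' : q c' = 1 := by
        rw [hc', hq_smul, norm_inv, Complex.norm_real, Real.norm_eq_abs, abs_of_pos hcpos,
          inv_mul_cancel₀ (ne_of_gt hcpos)]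
      have hcc : c = ((q c : ℝ) : ℂ) • c' := by
        rw [hc', smul_smul, mul_inv_cancel₀ hcne, one_smul]
      calc q (mulAct x c) = q (mulAct x (((q c : ℝ) : ℂ) • c')) := by rw [← hcc]
      _ = ‖((q c : ℝ) : ℂ)‖ * q (mulAct x c') := by rw [m_smul_right, hq_smul]
      _ ≤ q c * Q x := by
          rw [Complex.norm_real, Real.norm_eq_abs, abs_of_pos hcpos]
          exact mul_le_mul_of_nonneg_left (hle x c' hqc'.le) (le_of_lt hcpos)
      _ = Q x * q c := mul_comm _ _
  -- Q is a C*-seminorm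
  have Qadd : ∀ x y, Q (x + y) ≤ Q x + Q y := by
    intro x y
    refine hQ_le _ _ fun c hc => ?_
    rw [m_add]
    exact (hq_add _ _).trans (add_le_add (hle x c hc) (hle y c hc))
  have Qmul : ∀ x y, Q (x * y) ≤ Q x * Q y := by
    intro x y
    refine hQ_le _ _ fun c hc => ?_
    rw [m_assoc]
    exact (hQ_mulAct x _).trans (mul_le_mul_of_nonneg_left (hle y c hc) (hQ_nonneg x))
  have Qsmul_le : ∀ (γ : ℂ) x, Q (γ • x) ≤ ‖γ‖ * Q x := by
    intro γ x
    refine hQ_le _ _ fun c hc => ?_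
    rw [m_smul, hq_smul]
    exact mul_le_mul_of_nonneg_left (hle x c hc) (norm_nonneg γ)
  have Qzero : Q 0 = 0 := le_antisymm
    (hQ_le _ _ fun c hc => by rw [m_zero, hq0]) (hQ_nonneg 0)
  have Qsmul : ∀ (γ : ℂ) x, Q (γ • x) = ‖γ‖ * Q x := by
    intro γ x
    rcases eq_or_ne γ 0 with rfl | hγ
    · rw [zero_smul, Qzero, norm_zero, zero_mul]
    · refine le_antisymm (Qsmul_le γ x) ?_
      have h1 : Q x ≤ ‖γ⁻¹‖ * Q (γ • x) := by
        have := Qsmul_le γ⁻¹ (γ • x)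
        rwa [smul_smul, inv_mul_cancel₀ hγ, one_smul] at this
      have h2 : ‖γ‖ * Q x ≤ ‖γ‖ * (‖γ⁻¹‖ * Q (γ • x)) :=
        mul_le_mul_of_nonneg_left h1 (norm_nonneg γ)
      rwa [norm_inv, ← mul_assoc, mul_inv_cancel₀ (norm_ne_zero_iff.mpr hγ), one_mul] at h2
  have Qstep1 : ∀ x, Q x ^ 2 ≤ Q (star x * x) := by
    intro x
    have hs : ∀ c : ↥B, q c ≤ 1 → q (mulAct x c) ≤ Real.sqrt (Q (star x * x)) := by
      intro c hc
      have h1 : q (mulAct x c) ^ 2 ≤ Q (star x * x) := by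
        calc q (mulAct x c) ^ 2 = q (star (mulAct x c) * mulAct x c) := (hq_cstar _).symm
        _ = q (star c * mulAct (star x * x) c) := by rw [m_cstar]
        _ ≤ q (star c) * q (mulAct (star x * x) c) := hq_mul _ _
        _ ≤ 1 * Q (star x * x) := by
            rw [hq_star]
            exact mul_le_mul hc (hle _ c hc) (hq_nonneg _) zero_le_one
        _ = Q (star x * x) := one_mul _
      calc q (mulAct x c) = Real.sqrt (q (mulAct x c) ^ 2) :=
            (Real.sqrt_sq (hq_nonneg _)).symm
      _ ≤ Real.sqrt (Q (star x * x)) := Real.sqrt_le_sqrt h1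
    have h2 : Q x ≤ Real.sqrt (Q (star x * x)) := hQ_le _ _ hs
    calc Q x ^ 2 ≤ Real.sqrt (Q (star x * x)) ^ 2 :=
          pow_le_pow_left₀ (hQ_nonneg x) h2 2
    _ = Q (star x * x) := Real.sq_sqrt (hQ_nonneg _)
  have Qstar_half : ∀ x, Q x ≤ Q (star x) := by
    intro x
    rcases eq_or_lt_of_le (hQ_nonneg x) with h0 | hpos
    · rw [← h0]; exact hQ_nonneg _
    · have h1 := (Qstep1 x).trans (Qmul (star x) x)
      rw [sq] at h1
      exact le_of_mul_le_mul_right h1 hpos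
  have Qstar : ∀ x, Q (star x) = Q x := fun x =>
    le_antisymm (by simpa using Qstar_half (star x)) (Qstar_half x)
  have Qcstar : ∀ x, Q (star x * x) = Q x ^ 2 := by
    intro x
    refine le_antisymm ?_ (Qstep1 x)
    calc Q (star x * x) ≤ Q (star x) * Q x := Qmul _ _
    _ = Q x ^ 2 := by rw [Qstar, sq]
  -- the normalizing element
  set a' : ↥B := ⟨a, haB⟩ with ha'
  have hqa' : q a' = p a := rfl
  set c₀ : ↥B := (((p a : ℝ) : ℂ))⁻¹ • a' with hc₀
  have hqc₀ : q c₀ = 1 := by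
    rw [hc₀, hq_smul, norm_inv, Complex.norm_real, Real.norm_eq_abs, abs_of_pos hpa_pos, hqa',
      inv_mul_cancel₀ (ne_of_gt hpa_pos)]
  have Qone : Q 1 = 1 := by
    refine le_antisymm (hQ_le _ _ fun c hc => by rwa [m_one]) ?_
    have := hle 1 c₀ hqc₀.le
    rwa [m_one, hqc₀] at this
  -- Q (inr a') ≥ p a
  have hQinr : p a ≤ Q (Unitization.inr a') := by
    have h1 : q (mulAct (Unitization.inr a') c₀) = p a := by
      rw [m_inr, hc₀, mul_smul_comm, hq_smul, norm_inv, Complex.norm_real, Real.norm_eq_abs,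
        abs_of_pos hpa_pos]
      have h2 : q (a' * a') = p a ^ 2 := by
        have : (↑(a' * a') : A) = star a * a := by
          simp [ha', ha_star]
        rw [hq_def]
        show p ↑(a' * a') = p a ^ 2
        rw [this, hp_cstar a haB]
      rw [h2, sq, ← mul_assoc, inv_mul_cancel₀ (ne_of_gt hpa_pos), one_mul]
    rw [← h1]
    exact hle _ c₀ hqc₀.le
  -- the self-adjoint element
  have ha'sa : IsSelfAdjoint (Unitization.inr a' : Unitization ℂ ↥B) := by
    show star (Unitization.inr a') = Unitization.inr a'
    rw [← Unitization.inr_star]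
    congr 1
    exact Subtype.ext ha_star
  obtain ⟨l, hl_eq, hl_not⟩ :=
    aux_exists_spectrum Q Qsmul Qadd Qmul Qstar Qcstar Qone (Unitization.inr a') ha'sa
  have hlgt : ‖a‖ < ‖l‖ := by
    rw [hl_eq]
    exact lt_of_lt_of_le hcon hQinr
  -- invertibility in the unitization of A
  set X : Unitization ℂ A := algebraMap ℂ (Unitization ℂ A) l - Unitization.inr a with hX
  have hXunit : IsUnit X := by
    by_contra hXn
    have hmem : l ∈ spectrum ℂ (Unitization.inr a : Unitization ℂ A) :=
      spectrum.mem_iff.mpr hXn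
    have := spectrum.norm_le_norm_of_mem hmem
    rw [Unitization.norm_inr] at this
    exact absurd this (not_le.mpr hlgt)
  have hXsnd : X.snd = -a := by
    rw [hX]
    simp [sub_eq_add_neg, Unitization.snd_add, Unitization.snd_neg,
      Unitization.algebraMap_eq_inl]
  have hXfst : X.fst = l := by
    rw [hX]
    simp [sub_eq_add_neg, Unitization.fst_add, Unitization.fst_neg,
      Unitization.algebraMap_eq_inl]
  set u := hXunit.unit with hu
  set y : Unitization ℂ A := ↑u⁻¹ with hy
  have hxy : X * y = 1 := u.mul_inv
  have hyx : y * X = 1 := u.inv_mul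
  have hysnd : y.snd ∈ B := hspec X (by rw [hXsnd]; exact neg_mem haB) y hxy hyx
  -- transfer to the unitization of ↥B
  set Y : Unitization ℂ ↥B := Unitization.inl y.fst + Unitization.inr ⟨y.snd, hysnd⟩ with hY
  set X' : Unitization ℂ ↥B := algebraMap ℂ (Unitization ℂ ↥B) l - Unitization.inr a' with hX'
  have hX'fst : X'.fst = l := by
    rw [hX']
    simp [sub_eq_add_neg, Unitization.fst_add, Unitization.fst_neg,
      Unitization.algebraMap_eq_inl]
  have hX'snd : X'.snd = -a' := by
    rw [hX']
    simp [sub_eq_add_neg, Unitization.snd_add, Unitization.snd_neg,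
      Unitization.algebraMap_eq_inl]
  have hYfst : Y.fst = y.fst := by simp [hY]
  have hYsnd : (Y.snd : A) = y.snd := by simp [hY]
  have hfst1 : X.fst * y.fst = 1 := by
    have : (X * y).fst = (1 : Unitization ℂ A).fst := by rw [hxy]
    rwa [Unitization.fst_mul, Unitization.fst_one] at this
  have hfst2 : y.fst * X.fst = 1 := by
    have : (y * X).fst = (1 : Unitization ℂ A).fst := by rw [hyx]
    rwa [Unitization.fst_mul, Unitization.fst_one] at this
  have hsnd1 : X.fst • y.snd + y.fst • X.snd + X.snd * y.snd = 0 := by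
    have : (X * y).snd = (1 : Unitization ℂ A).snd := by rw [hxy]
    rwa [Unitization.snd_mul, Unitization.snd_one] at this
  have hsnd2 : y.fst • X.snd + X.fst • y.snd + y.snd * X.snd = 0 := by
    have : (y * X).snd = (1 : Unitization ℂ A).snd := by rw [hyx]
    rwa [Unitization.snd_mul, Unitization.snd_one] at this
  rw [hXfst, hXsnd] at hsnd1 hsnd2
  rw [hXfst] at hfst1 hfst2
  have hXY : X' * Y = 1 := by
    refine Unitization.ext ?_ ?_
    · rw [Unitization.fst_mul, Unitization.fst_one, hX'fst, hYfst]
      exact hfst1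
    · rw [Unitization.snd_mul, Unitization.snd_one]
      apply Subtype.ext
      push_cast [hX'fst, hX'snd, hYfst, hYsnd]
      exact hsnd1
  have hYX : Y * X' = 1 := by
    refine Unitization.ext ?_ ?_
    · rw [Unitization.fst_mul, Unitization.fst_one, hX'fst, hYfst]
      exact hfst2
    · rw [Unitization.snd_mul, Unitization.snd_one]
      apply Subtype.ext
      push_cast [hX'fst, hX'snd, hYfst, hYsnd]
      exact hsnd2
  exact hl_not ⟨⟨X', Y, hXY, hYX⟩, rfl⟩
end

section
/- Let A be a unital algebra whose unit 1 does not belong to the subalgebra B, and let Ḃ be the subalgebra of A generated by B and 1. Then Ḃ is spectrally invariant in A if and only if (i) the unitization B̃ is spectrally invariant in Ã and (ii) no element of B is invertible in A. -/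
private lemma expand_aux {A : Type*} [Ring A] [Algebra ℂ A] (α γ : ℂ) (b c : A) :
    (α • (1 : A) + b) * (γ • (1 : A) + c)
      = (α * γ) • (1 : A) + (α • c + γ • b + b * c) := by
  simp only [mul_add, add_mul, smul_mul_assoc, mul_smul_comm, smul_smul, smul_add,
    one_mul, mul_one, mul_comm γ α]
  abel

/-- Let `A` be a unital complex algebra whose unit does not belong to the (non-unital)
subalgebra `B`, and let `Ḃ = {β·1 + b : β ∈ ℂ, b ∈ B}` be the subalgebra of `A` generated by
`B` and `1`.  Then `Ḃ` is spectrally invariant in `A` if and only if (i) the unitization `B̃`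
is spectrally invariant in `Ã` and (ii) no element of `B` is invertible in `A`. -/
theorem dot_spectrally_invariant_iff
    {A : Type*} [Ring A] [Algebra ℂ A] (B : NonUnitalSubalgebra ℂ A)
    (hone : (1 : A) ∉ B) :
    (∀ (β : ℂ), ∀ b ∈ B, ∀ c : A,
        (β • (1 : A) + b) * c = 1 → c * (β • (1 : A) + b) = 1 →
        ∃ β' : ℂ, ∃ b' ∈ B, c = β' • (1 : A) + b') ↔
      ((∀ x : Unitization ℂ A, x.snd ∈ B →
          ∀ y : Unitization ℂ A, x * y = 1 → y * x = 1 → y.snd ∈ B) ∧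
        ∀ b ∈ B, ¬ IsUnit (b : A)) := by
  constructor
  · intro H
    refine ⟨?_, ?_⟩
    · intro x hx y hxy hyx
      have h1 : x.fst * y.fst = 1 := by
        have := congrArg (fun z : Unitization ℂ A => z.fst) hxy; simpa using this
      have h1' : y.fst * x.fst = 1 := by
        have := congrArg (fun z : Unitization ℂ A => z.fst) hyx; simpa using this
      have h2 : x.fst • y.snd + y.fst • x.snd + x.snd * y.snd = 0 := by
        have := congrArg (fun z : Unitization ℂ A => z.snd) hxy; simpa using this
      have h2' : y.fst • x.snd + x.fst • y.snd + y.snd * x.snd = 0 := by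
        have := congrArg (fun z : Unitization ℂ A => z.snd) hyx; simpa using this
      have hmulA : (x.fst • (1:A) + x.snd) * (y.fst • (1:A) + y.snd) = 1 := by
        rw [expand_aux, h1, h2, one_smul, add_zero]
      have hmulA' : (y.fst • (1:A) + y.snd) * (x.fst • (1:A) + x.snd) = 1 := by
        rw [expand_aux, h1', h2', one_smul, add_zero]
      obtain ⟨β', b', hb', heq⟩ := H x.fst x.snd hx (y.fst • (1:A) + y.snd) hmulA hmulA'
      have hy : y.snd = (β' - y.fst) • (1:A) + b' := by
        rw [sub_smul]
        have : y.snd = β' • (1:A) + b' - y.fst • (1:A) := by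
          rw [← heq]; abel
        rw [this]; abel
      have h2'' := h2
      rw [hy, smul_add, smul_smul, mul_add, mul_smul_comm, mul_one, add_assoc, add_assoc] at h2''
      have hmemB : (x.fst * (β' - y.fst)) • (1:A) ∈ B := by
        rw [eq_neg_of_add_eq_zero_left h2'']
        exact B.neg_mem (B.add_mem (B.smul_mem _ hb') (B.add_mem (B.smul_mem _ hx)
          (B.add_mem (B.smul_mem _ hx) (B.mul_mem hx hb'))))
      have hδ0 : β' - y.fst = 0 := by
        by_contra hδ
        apply hone
        have hne : x.fst * (β' - y.fst) ≠ 0 :=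
          mul_ne_zero (left_ne_zero_of_mul_eq_one h1) hδ
        have h1e : (1:A) = (x.fst * (β' - y.fst))⁻¹ • ((x.fst * (β' - y.fst)) • (1:A)) := by
          rw [smul_smul, inv_mul_cancel₀ hne, one_smul]
        rw [h1e]
        exact B.smul_mem _ hmemB
      rw [hy, hδ0, zero_smul, zero_add]
      exact hb'
    · intro b hb hu
      obtain ⟨c, hc1, hc2⟩ : ∃ c : A, b * c = 1 ∧ c * b = 1 := by
        obtain ⟨u, rfl⟩ := hu
        exact ⟨↑u⁻¹, u.mul_inv, u.inv_mul⟩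
      obtain ⟨β', b', hb', heq⟩ := H 0 b hb c (by simpa using hc1) (by simpa using hc2)
      apply hone
      have h1e : (1 : A) = β' • b + b' * b := by
        rw [← hc2, heq, add_mul, smul_mul_assoc, one_mul]
      rw [h1e]
      exact B.add_mem (B.smul_mem β' hb) (B.mul_mem hb' hb)
  · rintro ⟨Hi, Hii⟩ β b hb c hc1 hc2
    have hβ : β ≠ 0 := by
      rintro rfl
      simp only [zero_smul, zero_add] at hc1 hc2
      exact Hii b hb ⟨⟨b, c, hc1, hc2⟩, rfl⟩
    set x : Unitization ℂ A := Unitization.inl β + Unitization.inr b with hxdef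
    set y : Unitization ℂ A := Unitization.inl β⁻¹ + Unitization.inr (c - β⁻¹ • 1) with hydef
    have hxf : x.fst = β := by
      simp only [hxdef, Unitization.fst_add, Unitization.fst_inl, Unitization.fst_inr, add_zero]
    have hxs : x.snd = b := by
      simp only [hxdef, Unitization.snd_add, Unitization.snd_inl, Unitization.snd_inr, zero_add]
    have hyf : y.fst = β⁻¹ := by
      simp only [hydef, Unitization.fst_add, Unitization.fst_inl, Unitization.fst_inr, add_zero]
    have hys : y.snd = c - β⁻¹ • 1 := by
      simp only [hydef, Unitization.snd_add, Unitization.snd_inl, Unitization.snd_inr, zero_add]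
    have hcsum : β⁻¹ • (1:A) + (c - β⁻¹ • 1) = c := by abel
    have hsnd : β • (c - β⁻¹ • 1) + β⁻¹ • b + b * (c - β⁻¹ • 1) = 0 := by
      have e : (β • (1:A) + b) * (β⁻¹ • (1:A) + (c - β⁻¹ • 1)) = 1 := by
        rw [hcsum]; exact hc1
      rw [expand_aux, mul_inv_cancel₀ hβ, one_smul] at e
      exact add_eq_left.mp e
    have hsnd' : β⁻¹ • b + β • (c - β⁻¹ • 1) + (c - β⁻¹ • 1) * b = 0 := by
      have e : (β⁻¹ • (1:A) + (c - β⁻¹ • 1)) * (β • (1:A) + b) = 1 := by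
        rw [hcsum]; exact hc2
      rw [expand_aux, inv_mul_cancel₀ hβ, one_smul] at e
      exact add_eq_left.mp e
    have hxy : x * y = 1 := by
      apply Unitization.ext
      · rw [Unitization.fst_mul, hxf, hyf, Unitization.fst_one]
        exact mul_inv_cancel₀ hβ
      · rw [Unitization.snd_mul, hxs, hys, hxf, hyf, Unitization.snd_one]
        exact hsnd
    have hyx : y * x = 1 := by
      apply Unitization.ext
      · rw [Unitization.fst_mul, hxf, hyf, Unitization.fst_one]
        exact inv_mul_cancel₀ hβ
      · rw [Unitization.snd_mul, hxs, hys, hxf, hyf, Unitization.snd_one]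
        exact hsnd'
    have hmem : y.snd ∈ B := Hi x (hxs ▸ hb) y hxy hyx
    rw [hys] at hmem
    exact ⟨β⁻¹, c - β⁻¹ • 1, hmem, by rw [hcsum]⟩
end
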